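/- Let H be a connected acyclic locally semicomplete digraph. Then there is a unique ordering v_1, v_2, …, v_p of the vertices of H such that there is no arc v_j→v_i with j > i and v_i→v_{i+1} for every i = 1, …, p−1, and this ordering is a Min-Max ordering of H; in particular, H admits a Min-Max ordering. -/

import Mathlib

section Aux

variable {V : Type} (A : V → V → Prop)

/-- comparability when x is an in-neighbor of an endpoint of a path. -/
private lemma aux_L1 (hirr : ∀ v, ¬ A v v)
    (hloc_in : ∀ x y z : V, y ≠ z → A y x → A z x → (A y z ∨ A z y))
    {x y z : V} (hxz : A x z) (h : Relation.TransGen A y z) :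
    x = y ∨ Relation.TransGen A x y ∨ Relation.TransGen A y x := by
  induction h generalizing x with
  | single hyz =>
    by_cases hxy : x = y
    · exact Or.inl hxy
    · rcases hloc_in _ x y hxy hxz hyz with h1 | h1
      · exact Or.inr (Or.inl (Relation.TransGen.single h1))
      · exact Or.inr (Or.inr (Relation.TransGen.single h1))
  | @tail w z' hyw hwz ih =>
    by_cases hxw : x = w
    · subst hxw; exact Or.inr (Or.inr hyw)
    · rcases hloc_in _ x w hxw hxz hwz with h1 | h1
      · exact ih h1
      · exact Or.inr (Or.inr (hyw.tail h1))

private lemma aux_L2 (hirr : ∀ v, ¬ A v v)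
    (hloc_out : ∀ x y z : V, y ≠ z → A x y → A x z → (A y z ∨ A z y))
    {x y z : V} (hzx : A z x) (h : Relation.TransGen A z y) :
    x = y ∨ Relation.TransGen A x y ∨ Relation.TransGen A y x := by
  induction h using Relation.TransGen.head_induction_on generalizing x with
  | single hzy =>
    by_cases hxy : x = y
    · exact Or.inl hxy
    · rcases hloc_out _ x y hxy hzx hzy with h1 | h1
      · exact Or.inr (Or.inl (Relation.TransGen.single h1))
      · exact Or.inr (Or.inr (Relation.TransGen.single h1))
  | @head z' w hzw hwy ih =>
    by_cases hxw : x = w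
    · subst hxw; exact Or.inr (Or.inl hwy)
    · rcases hloc_out _ x w hxw hzx hzw with h1 | h1
      · exact Or.inr (Or.inl (hwy.head h1))
      · exact ih h1

/-- Totality of reachability. -/
private lemma aux_total (hirr : ∀ v, ¬ A v v)
    (hloc_out : ∀ x y z : V, y ≠ z → A x y → A x z → (A y z ∨ A z y))
    (hloc_in : ∀ x y z : V, y ≠ z → A y x → A z x → (A y z ∨ A z y))
    (hconn : ∀ x y : V, Relation.ReflTransGen (fun u w => A u w ∨ A w u) x y)
    {x y : V} (hxy : x ≠ y) :
    Relation.TransGen A x y ∨ Relation.TransGen A y x := by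
  have h := hconn x y
  induction h with
  | refl => exact absurd rfl hxy
  | @tail w y' hxw hwy ih =>
    by_cases hxw' : x = w
    · subst hxw'
      rcases hwy with h1 | h1
      · exact Or.inl (Relation.TransGen.single h1)
      · exact Or.inr (Relation.TransGen.single h1)
    · rcases ih hxw' with h2 | h2
      · rcases hwy with h1 | h1
        · exact Or.inl (h2.tail h1)
        · rcases aux_L1 A hirr hloc_in h1 h2 with h3 | h3 | h3
          · exact absurd h3.symm hxy
          · exact Or.inr h3
          · exact Or.inl h3
      · rcases hwy with h1 | h1
        · rcases aux_L2 A hirr hloc_out h1 h2 with h3 | h3 | h3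
          · exact absurd h3.symm hxy
          · exact Or.inr h3
          · exact Or.inl h3
        · exact Or.inr (h2.head h1)

end Aux

/-- A connected acyclic locally semicomplete digraph has a unique ordering
`v_1, …, v_p` of its vertices with no backward arcs and `v_i → v_{i+1}` for all `i < p`,
and any such ordering is a Min-Max ordering; in particular a Min-Max ordering exists. -/
theorem stmt_3 {V : Type} [Fintype V] (A : V → V → Prop)
    (hirr : ∀ v, ¬ A v v)
    (hloc_out : ∀ x y z : V, y ≠ z → A x y → A x z → (A y z ∨ A z y))
    (hloc_in : ∀ x y z : V, y ≠ z → A y x → A z x → (A y z ∨ A z y))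
    (hconn : ∀ x y : V, Relation.ReflTransGen (fun u w => A u w ∨ A w u) x y)
    (hacyc : ∀ x y : V, A x y → ¬ Relation.ReflTransGen A y x) :
    (∃! e : Fin (Fintype.card V) ≃ V,
       (∀ i j : Fin (Fintype.card V), i < j → ¬ A (e j) (e i)) ∧
       (∀ i j : Fin (Fintype.card V), (i : ℕ) + 1 = (j : ℕ) → A (e i) (e j))) ∧
    (∀ e : Fin (Fintype.card V) ≃ V,
       ((∀ i j : Fin (Fintype.card V), i < j → ¬ A (e j) (e i)) ∧
        (∀ i j : Fin (Fintype.card V), (i : ℕ) + 1 = (j : ℕ) → A (e i) (e j))) →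
       ∀ i j s r : Fin (Fintype.card V), i < j → s < r →
         A (e i) (e r) → A (e j) (e s) → A (e i) (e s) ∧ A (e j) (e r)) := by
  classical
  set n := Fintype.card V with hn
  -- acyclicity for TransGen
  have hacyc' : ∀ x : V, ¬ Relation.TransGen A x x := by
    intro x hx
    cases hx with
    | single h => exact hacyc _ _ h Relation.ReflTransGen.refl
    | tail h1 h2 => exact hacyc _ _ h2 h1.to_reflTransGen
  -- strict total order
  letI : IsStrictTotalOrder V (Relation.TransGen A) := {
    irrefl := hacyc'
    trans := fun a b c h1 h2 => h1.trans h2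
    trichotomous := by
      intro a b
      by_cases hab : a = b
      · exact fun _ _ => hab
      · rcases aux_total A hirr hloc_out hloc_in hconn hab with h | h
        · exact fun h' _ => absurd h h'
        · exact fun _ h' => absurd h h' }
  letI : DecidableRel (Relation.TransGen A) := Classical.decRel _
  letI linV : LinearOrder V := linearOrderOfSTO (Relation.TransGen A)
  have hlt : ∀ x y : V, x < y ↔ Relation.TransGen A x y := fun _ _ => Iff.rfl
  let E : Fin n ≃o V := monoEquivOfFin V hn.symm
  -- key general lemma: any equiv satisfying the two conditions
  -- two conditions abbreviation
  have key : ∀ e : Fin n ≃ V,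
      ((∀ i j : Fin n, i < j → ¬ A (e j) (e i)) ∧
       (∀ i j : Fin n, (i : ℕ) + 1 = (j : ℕ) → A (e i) (e j))) →
      ∀ i j : Fin n, i < j → Relation.TransGen A (e i) (e j) := by
    intro e ⟨_, h2⟩ i j hij
    have : ∀ d : ℕ, ∀ i j : Fin n, (j : ℕ) = (i : ℕ) + d + 1 →
        Relation.TransGen A (e i) (e j) := by
      intro d
      induction d with
      | zero => intro i j hd; exact Relation.TransGen.single (h2 i j (by omega))
      | succ d ih =>
        intro i j hd
        have hlt' : (i : ℕ) + d + 1 < n := by omega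
        set k : Fin n := ⟨(i : ℕ) + d + 1, hlt'⟩ with hk
        exact (ih i k rfl).tail (h2 k j (by simp [hk]; omega))
    obtain ⟨d, hd⟩ : ∃ d : ℕ, (j : ℕ) = (i : ℕ) + d + 1 :=
      ⟨(j : ℕ) - (i : ℕ) - 1, by have := hij; omega⟩
    exact this d i j hd
  -- existence: E satisfies the conditions
  have hE1 : ∀ i j : Fin n, i < j → ¬ A (E.toEquiv j) (E.toEquiv i) := by
    intro i j hij hA
    have : Relation.TransGen A (E i) (E j) := (hlt _ _).mp (E.strictMono hij)
    exact hacyc _ _ hA this.to_reflTransGen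
  have hE2 : ∀ i j : Fin n, (i : ℕ) + 1 = (j : ℕ) → A (E.toEquiv i) (E.toEquiv j) := by
    intro i j hij
    have hij' : i < j := by omega
    have h : Relation.TransGen A (E i) (E j) := (hlt _ _).mp (E.strictMono hij')
    cases h with
    | single h => exact h
    | tail h1 h2 =>
      rename_i c
      -- E i < c < E j : contradiction
      exfalso
      have hc1 : (E i : V) < c := (hlt _ _).mpr h1
      have hc2 : c < E j := (hlt _ _).mpr (Relation.TransGen.single h2)
      set k := E.symm c with hk
      have hk1 : i < k := by
        have := E.symm.strictMono hc1; simpa using this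
      have hk2 : k < j := by
        have := E.symm.strictMono hc2; simpa using this
      omega
  -- uniqueness
  have huniq : ∀ e : Fin n ≃ V,
      ((∀ i j : Fin n, i < j → ¬ A (e j) (e i)) ∧
       (∀ i j : Fin n, (i : ℕ) + 1 = (j : ℕ) → A (e i) (e j))) →
      e = E.toEquiv := by
    intro e he
    have hmono : StrictMono e := by
      intro i j hij
      exact (hlt _ _).mpr (key e he i j hij)
    let F : Fin n ≃o V :=
      { toEquiv := e, map_rel_iff' := by
          intro i j
          exact hmono.le_iff_le }
    have hFE : F = E := Subsingleton.elim F E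
    calc e = F.toEquiv := rfl
      _ = E.toEquiv := by rw [hFE]
  refine ⟨⟨E.toEquiv, ⟨hE1, hE2⟩, fun e he => huniq e he⟩, ?_⟩
  -- Min-Max property
  intro e ⟨h1, h2⟩ i j s r hij hsr hAir hAjs
  have hinj : Function.Injective e := e.injective
  -- arcs go forward
  have hfwd : ∀ a b : Fin n, A (e a) (e b) → a < b := by
    intro a b hab
    rcases lt_trichotomy a b with h | h | h
    · exact h
    · subst h; exact absurd hab (hirr _)
    · exact absurd hab (h1 b a h)
  -- interval lemma part 1: a → c, a < b ≤ c ⇒ a → b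
  have hint1 : ∀ a c : Fin n, A (e a) (e c) → ∀ b : Fin n, a < b → b ≤ c → A (e a) (e b) := by
    intro a c hac
    have hac' : a < c := hfwd a c hac
    have main : ∀ d : ℕ, ∀ b : Fin n, (b : ℕ) = (a : ℕ) + 1 + d → b ≤ c → A (e a) (e b) := by
      intro d
      induction d with
      | zero => intro b hb _; exact h2 a b (by omega)
      | succ d ih =>
        intro b hb hbc
        have hb'lt : (a : ℕ) + 1 + d < n := by omega
        set b' : Fin n := ⟨(a : ℕ) + 1 + d, hb'lt⟩ with hb'
        have hb'b : (b' : ℕ) + 1 = (b : ℕ) := by simp [hb']; omega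
        have hb'c : b' ≤ c := by
          have : b' < b := by omega
          exact le_trans (le_of_lt this) hbc
        have hab' : A (e a) (e b') := ih b' rfl hb'c
        by_cases hbceq : b = c
        · subst hbceq; exact hac
        · have hb'ne : b' ≠ c := by
            intro hh; subst hh
            have : b ≤ b' := hbc
            omega
          -- b' and c adjacent (out-neighbors of a)
          have hb'c' : A (e b') (e c) := by
            rcases hloc_out (e a) (e b') (e c) (fun hh => hb'ne (hinj hh)) hab' hac with h | h
            · exact h
            · exfalso; exact h1 b' c (by omega) h
          -- b'→b (consecutive) and b'→c, so b and c adjacent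
          have hb'bArc : A (e b') (e b) := h2 b' b hb'b
          have hbc' : A (e b) (e c) := by
            rcases hloc_out (e b') (e b) (e c) (fun hh => hbceq (hinj hh)) hb'bArc hb'c' with h | h
            · exact h
            · exfalso
              have hblt : b < c := lt_of_le_of_ne hbc hbceq
              exact h1 b c hblt h
          -- a and b in-neighbors of c
          have hane : e a ≠ e b := fun hh => by
            have : a = b := hinj hh; omega
          rcases hloc_in (e c) (e a) (e b) hane hac hbc' with h | h
          · exact h
          · exfalso
            exact h1 a b (by omega) h
    intro b hab hbc
    obtain ⟨d, hd⟩ : ∃ d : ℕ, (b : ℕ) = (a : ℕ) + 1 + d := ⟨(b : ℕ) - (a : ℕ) - 1, by omega⟩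
    exact main d b hd hbc
  -- interval lemma part 2: a → c, a ≤ b < c ⇒ b → c
  have hint2 : ∀ a c : Fin n, A (e a) (e c) → ∀ b : Fin n, a ≤ b → b < c → A (e b) (e c) := by
    intro a c hac b hab hbc
    rcases eq_or_lt_of_le hab with h | h
    · subst h; exact hac
    · have habArc : A (e a) (e b) := hint1 a c hac b h (le_of_lt hbc)
      have hbne : e b ≠ e c := fun hh => by
        have : b = c := hinj hh; omega
      rcases hloc_out (e a) (e b) (e c) hbne habArc hac with h | h
      · exact h
      · exact absurd h (h1 b c hbc)
  -- now conclude
  have hir : i < r := hfwd i r hAir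
  have hjs : j < s := hfwd j s hAjs
  constructor
  · exact hint1 i r hAir s (lt_trans hij hjs) (le_of_lt hsr)
  · exact hint2 i r hAir j (le_of_lt hij) (lt_trans hjs hsr)
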